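/- Let G be a connected graph with n ≥ 3 vertices. Then any locally-optimal coloring of G uses at most ⌊n/3⌋ distinct colors. -/
import Mathlib


/-- A locally-optimal `k`-coloring: each vertex's own color appears strictly
more often among its neighbors than any other color (plurality). -/
def IsLocOpt {V : Type*} {k : ℕ} (G : SimpleGraph V) (c : V → Fin k) : Prop :=
  ∀ v : V, ∀ d : Fin k, d ≠ c v →
    Nat.card {w : V // G.Adj v w ∧ c w = d} < Nat.card {w : V // G.Adj v w ∧ c w = c v}

/-- The number of locally-optimal `k`-colorings of `G`. -/
noncomputable def LOcount {V : Type*} (G : SimpleGraph V) (k : ℕ) : ℕ :=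
  Nat.card {c : V → Fin k // IsLocOpt G c}

private lemma walk_aux {V : Type*} (G : SimpleGraph V) {v w u : V}
    (hv : ∀ y, G.Adj v y → y = w) (hw : ∀ y, G.Adj w y → y = v)
    (huv : u ≠ v) (huw : u ≠ w) :
    ∀ {a : V}, G.Walk a u → (a = v ∨ a = w) → False := by
  intro a p
  induction p with
  | nil =>
    rintro (h1 | h1)
    · exact huv h1
    · exact huw h1
  | cons h q ih =>
    rintro (h1 | h1)
    · exact ih huv huw (Or.inr (hv _ (h1 ▸ h)))
    · exact ih huv huw (Or.inl (hw _ (h1 ▸ h)))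

/-- A connected graph on `n ≥ 3` vertices admits at most `⌊n/3⌋` distinct
colors in any locally-optimal coloring. -/
theorem stmt4 {V : Type*} [Fintype V] [DecidableEq V] (G : SimpleGraph V) {k : ℕ}
    (hconn : G.Connected) (hn : 3 ≤ Fintype.card V)
    (c : V → Fin k) (hc : IsLocOpt G c) :
    (Finset.univ.image c).card ≤ Fintype.card V / 3 := by
  classical
  by_cases hk : 2 ≤ k
  · haveI : Nontrivial (Fin k) := Fin.nontrivial_iff_two_le.mpr hk
    -- every vertex has a same-colored neighbor
    have hA : ∀ v : V, ∃ w, G.Adj v w ∧ c w = c v := by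
      intro v
      obtain ⟨d, hd⟩ := exists_ne (c v)
      have h := hc v d hd
      have hpos : 0 < Nat.card {w : V // G.Adj v w ∧ c w = c v} :=
        lt_of_le_of_lt (Nat.zero_le _) h
      obtain ⟨⟨⟨w, hw⟩⟩, -⟩ := Nat.card_pos_iff.mp hpos
      exact ⟨w, hw⟩
    -- a differently-colored neighbor forces ≥ 2 same-colored neighbors
    have hB : ∀ v y : V, G.Adj v y → c y ≠ c v →
        1 < Nat.card {w : V // G.Adj v w ∧ c w = c v} := by
      intro v y hadj hne
      have h1 := hc v (c y) hne
      haveI : Nonempty {w : V // G.Adj v w ∧ c w = c y} := ⟨⟨y, hadj, rfl⟩⟩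
      have h2 : 0 < Nat.card {w : V // G.Adj v w ∧ c w = c y} := Nat.card_pos
      omega
    have hdich : ∀ v : V,
        (∃ a b, G.Adj v a ∧ G.Adj v b ∧ c a = c v ∧ c b = c v ∧ a ≠ b)
        ∨ ∃ w, G.Adj v w ∧ c w = c v ∧ ∀ y, G.Adj v y → y = w := by
      intro v
      by_cases h : 1 < Nat.card {w : V // G.Adj v w ∧ c w = c v}
      · left
        haveI : Nontrivial {w : V // G.Adj v w ∧ c w = c v} :=
          Finite.one_lt_card_iff_nontrivial.mp h
        obtain ⟨⟨a, ha⟩, ⟨b, hb⟩, hne⟩ := exists_pair_ne {w : V // G.Adj v w ∧ c w = c v}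
        refine ⟨a, b, ha.1, hb.1, ha.2, hb.2, fun hab => hne (Subtype.ext hab)⟩
      · right
        obtain ⟨w, hw1, hw2⟩ := hA v
        refine ⟨w, hw1, hw2, ?_⟩
        intro y hy
        have hcy : c y = c v := by
          by_contra hne
          exact h (hB v y hy hne)
        haveI : Nonempty {x : V // G.Adj v x ∧ c x = c v} := ⟨⟨w, hw1, hw2⟩⟩
        have hpos : 0 < Nat.card {x : V // G.Adj v x ∧ c x = c v} := Nat.card_pos
        have hone : Nat.card {x : V // G.Adj v x ∧ c x = c v} = 1 := by omega
        have hsub : Subsingleton {x : V // G.Adj v x ∧ c x = c v} :=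
          (Nat.card_eq_one_iff_unique.mp hone).1
        exact congrArg Subtype.val
          (hsub.elim (⟨y, hy, hcy⟩ : {x : V // G.Adj v x ∧ c x = c v}) ⟨w, hw1, hw2⟩)
    have hfiber : ∀ d ∈ Finset.univ.image c,
        3 ≤ (Finset.univ.filter (fun x => c x = d)).card := by
      intro d hd
      obtain ⟨v, -, rfl⟩ := Finset.mem_image.mp hd
      have key : ∀ u a b : V, c u = c v → G.Adj u a → G.Adj u b →
          c a = c u → c b = c u → a ≠ b →
          3 ≤ (Finset.univ.filter (fun x => c x = c v)).card := by
        intro u a b hu hua hub hca hcb hab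
        have hsub : ({u, a, b} : Finset V) ⊆ Finset.univ.filter (fun x => c x = c v) := by
          intro x hx
          simp only [Finset.mem_insert, Finset.mem_singleton] at hx
          rcases hx with rfl | rfl | rfl
          · simp [hu]
          · simp [hca.trans hu]
          · simp [hcb.trans hu]
        have hcard3 : ({u, a, b} : Finset V).card = 3 := by
          rw [Finset.card_insert_of_notMem, Finset.card_insert_of_notMem,
            Finset.card_singleton]
          · simpa using hab
          · simp only [Finset.mem_insert, Finset.mem_singleton]
            push_neg
            exact ⟨hua.ne, hub.ne⟩
        calc 3 = ({u, a, b} : Finset V).card := hcard3.symm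
          _ ≤ _ := Finset.card_le_card hsub
      rcases hdich v with ⟨a, b, h1, h2, h3, h4, h5⟩ | ⟨w, hadj, hcw, hNv⟩
      · exact key v a b rfl h1 h2 h3 h4 h5
      · rcases hdich w with ⟨a, b, h1, h2, h3, h4, h5⟩ | ⟨w', hadj', hcw', hNw⟩
        · exact key w a b hcw h1 h2 h3 h4 h5
        · have hNw' : ∀ y, G.Adj w y → y = v := by
            intro y hy
            rw [hNw y hy, ← hNw v hadj.symm]
          exfalso
          have hex : ∃ u : V, u ≠ v ∧ u ≠ w := by
            by_contra hcon
            push_neg at hcon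
            have hsub : (Finset.univ : Finset V) ⊆ {v, w} := by
              intro x _
              by_cases hxv : x = v
              · simp [hxv]
              · simp [hcon x hxv]
            have hle := Finset.card_le_card hsub
            have h2 : ({v, w} : Finset V).card ≤ 2 :=
              (Finset.card_insert_le _ _).trans (by simp)
            simp only [Finset.card_univ] at hle
            omega
          obtain ⟨u, huv, huw⟩ := hex
          exact (hconn v u).elim fun p => walk_aux G hNv hNw' huv huw p (Or.inl rfl)
    have hsum : ∑ d ∈ Finset.univ.image c,
        (Finset.univ.filter (fun x => c x = d)).card = Fintype.card V := by
      rw [← Finset.card_univ]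
      exact (Finset.card_eq_sum_card_fiberwise
        (fun x _ => Finset.mem_image_of_mem c (Finset.mem_univ x))).symm
    have hmul : (Finset.univ.image c).card * 3 ≤ Fintype.card V := by
      calc (Finset.univ.image c).card * 3
          = ∑ _d ∈ Finset.univ.image c, 3 := by
            rw [Finset.sum_const, smul_eq_mul]
        _ ≤ ∑ d ∈ Finset.univ.image c, (Finset.univ.filter (fun x => c x = d)).card :=
            Finset.sum_le_sum hfiber
        _ = Fintype.card V := hsum
    exact (Nat.le_div_iff_mul_le (by norm_num)).mpr hmul
  · have h1 : (Finset.univ.image c).card ≤ k := by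
      simpa using Finset.card_le_univ (Finset.univ.image c)
    have h2 : 1 ≤ Fintype.card V / 3 := by omega
    omega
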